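/- Let d = 5, k = 2, and K₀ ⊆ ℝ⁵ be the union over all pairs 1 ≤ i < j ≤ 5 of the squares {a e_i + b e_j : −1/2 ≤ a, b ≤ 1/2}. Define Ψ : (ℝ⁵)⁵ → (ℝ⁵)² by Ψ(x₁,...,x₅) = (x₅ + x₂ − x₁, x₅ + x₄ − x₃). Then there exist probability measures λ₁,...,λ₅ supported on K₀ such that for every nonnegative Borel function f on (ℝ⁵)², ∫ f(Ψ(x₁,...,x₅)) dλ₁(x₁)⋯dλ₅(x₅) ≤ ∫_{(ℝ⁵)²} f dm₁₀. In particular Ψ((K₀)⁵) has positive 10-dimensional Lebesgue measure. -/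

import Mathlib

open MeasureTheory Metric Set
open scoped Pointwise ENNReal

/-- The union of the coordinate squares `{a e_i + b e_j : |a|,|b| ≤ 1/2}`, `1 ≤ i < j ≤ 5`,
in `ℝ⁵`. -/
def squaresUnion : Set (EuclideanSpace ℝ (Fin 5)) :=
  ⋃ (i : Fin 5) (j : Fin 5) (_ : i < j),
    {x | (∀ l : Fin 5, l ≠ i → l ≠ j → x l = 0) ∧ |x i| ≤ 1 / 2 ∧ |x j| ≤ 1 / 2}

/-- The inflation map `Ψ(x₁,…,x₅) = (x₅ + x₂ − x₁, x₅ + x₄ − x₃)`. -/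
noncomputable def inflationMap (x₁ x₂ x₃ x₄ x₅ : EuclideanSpace ℝ (Fin 5)) :
    EuclideanSpace ℝ (Fin 5) × EuclideanSpace ℝ (Fin 5) :=
  (x₅ + x₂ - x₁, x₅ + x₄ - x₃)

/-! ### Auxiliary constructions -/

noncomputable section InflationAux

/-- Combining two pi-types over `Fin` into one. -/
def apEquiv (m n : ℕ) : ((Fin m → ℝ) × (Fin n → ℝ)) ≃ᵐ (Fin (m+n) → ℝ) :=
  (MeasurableEquiv.sumPiEquivProdPi (fun _ : Fin m ⊕ Fin n => ℝ)).symm.trans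
    (MeasurableEquiv.piCongrLeft (fun _ => ℝ) finSumFinEquiv)

lemma apMP (m n : ℕ) : MeasurePreserving (apEquiv m n) volume volume :=
  (volume_measurePreserving_sumPiEquivProdPi_symm _).trans
    (volume_measurePreserving_piCongrLeft _ _)

/-- The square `[-1/2,1/2]²`. -/
def sqI2 : Set (ℝ × ℝ) := Icc (-(1/2:ℝ)) (1/2) ×ˢ Icc (-(1/2:ℝ)) (1/2)

/-- The uniform probability measure on the square. -/
def rho2 : Measure (ℝ × ℝ) := volume.restrict sqI2

lemma volume_sqI2 : volume sqI2 = 1 := by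
  rw [sqI2, Measure.volume_eq_prod, Measure.prod_prod, Real.volume_Icc]
  norm_num

instance : IsProbabilityMeasure rho2 := by
  constructor
  rw [rho2, Measure.restrict_apply_univ]
  exact volume_sqI2

/-- The embedding of the square into a coordinate square of `ℝ⁵`, with scaling `s`. -/
def embm (i j : Fin 5) (s : ℝ) (w : ℝ × ℝ) : EuclideanSpace ℝ (Fin 5) :=
  WithLp.toLp 2 (fun l => if l = i then s * w.1 else if l = j then s * w.2 else 0 : Fin 5 → ℝ)

lemma embm_measurable (i j : Fin 5) (s : ℝ) : Measurable (embm i j s) := by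
  have h : Measurable (fun w : ℝ × ℝ =>
      (fun l => if l = i then s * w.1 else if l = j then s * w.2 else 0 : Fin 5 → ℝ)) := by
    apply measurable_pi_lambda
    intro l
    split_ifs <;> fun_prop
  exact (MeasurableEquiv.toLp 2 (Fin 5 → ℝ)).measurable.comp h

lemma embm_mem (i j : Fin 5) (hij : i < j) (s : ℝ) (hs : |s| ≤ 1) {w : ℝ × ℝ}
    (hw : w ∈ sqI2) : embm i j s w ∈ squaresUnion := by
  have h1 : |w.1| ≤ 1/2 := abs_le.2 ⟨hw.1.1, hw.1.2⟩
  have h2 : |w.2| ≤ 1/2 := abs_le.2 ⟨hw.2.1, hw.2.2⟩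
  refine mem_iUnion.2 ⟨i, mem_iUnion.2 ⟨j, mem_iUnion.2 ⟨hij, ?_, ?_, ?_⟩⟩⟩
  · intro l hli hlj
    show (if l = i then s * w.1 else if l = j then s * w.2 else 0) = 0
    rw [if_neg hli, if_neg hlj]
  · show |if i = i then s * w.1 else if i = j then s * w.2 else 0| ≤ 1/2
    rw [if_pos rfl, abs_mul]
    calc |s| * |w.1| ≤ 1 * (1/2) := mul_le_mul hs h1 (abs_nonneg _) zero_le_one
    _ = 1/2 := one_mul _
  · show |if j = i then s * w.1 else if j = j then s * w.2 else 0| ≤ 1/2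
    rw [if_neg hij.ne', if_pos rfl, abs_mul]
    calc |s| * |w.2| ≤ 1 * (1/2) := mul_le_mul hs h2 (abs_nonneg _) zero_le_one
    _ = 1/2 := one_mul _

lemma squaresUnion_measurable : MeasurableSet squaresUnion := by
  have hev : ∀ l : Fin 5, Measurable fun x : EuclideanSpace ℝ (Fin 5) => x l := fun l =>
    (measurable_pi_apply l).comp (MeasurableEquiv.toLp 2 (Fin 5 → ℝ)).symm.measurable
  refine MeasurableSet.iUnion fun i => MeasurableSet.iUnion fun j =>
    MeasurableSet.iUnion fun _ => ?_
  have : {x : EuclideanSpace ℝ (Fin 5) |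
      (∀ l : Fin 5, l ≠ i → l ≠ j → x l = 0) ∧ |x i| ≤ 1 / 2 ∧ |x j| ≤ 1 / 2} =
      (⋂ (l : Fin 5) (_ : l ≠ i) (_ : l ≠ j), {x | x l = 0}) ∩
        ({x | |x i| ≤ 1/2} ∩ {x | |x j| ≤ 1/2}) := by
    ext x
    simp only [mem_setOf_eq, mem_inter_iff, mem_iInter, mem_singleton_iff]
  rw [this]
  refine MeasurableSet.inter ?_ (MeasurableSet.inter ?_ ?_)
  · refine MeasurableSet.iInter fun l => MeasurableSet.iInter fun _ =>
      MeasurableSet.iInter fun _ => ?_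
    exact (hev l) (measurableSet_singleton 0)
  · exact (hev i).abs measurableSet_Iic
  · exact (hev j).abs measurableSet_Iic

/-- The five embeddings. -/
def embk : Fin 5 → (ℝ × ℝ) → EuclideanSpace ℝ (Fin 5) :=
  ![embm 3 4 (-1), embm 1 2 1, embm 3 4 (-1), embm 0 2 1, embm 0 1 1]

lemma embk_measurable (k : Fin 5) : Measurable (embk k) := by
  fin_cases k <;> exact embm_measurable _ _ _

/-- The five measures. -/
def lamF (k : Fin 5) : Measure (EuclideanSpace ℝ (Fin 5)) := rho2.map (embk k)

instance (k : Fin 5) : IsProbabilityMeasure (lamF k) :=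
  Measure.isProbabilityMeasure_map (embk_measurable k).aemeasurable

lemma lamF_compl (k : Fin 5) : lamF k squaresUnionᶜ = 0 := by
  rw [lamF, Measure.map_apply (embk_measurable k) squaresUnion_measurable.compl,
    rho2, Measure.restrict_apply ((embk_measurable k) squaresUnion_measurable.compl)]
  have : embk k ⁻¹' squaresUnionᶜ ∩ sqI2 = ∅ := by
    rw [eq_empty_iff_forall_notMem]
    rintro w ⟨hmem, hI⟩
    apply hmem
    fin_cases k
    · exact embm_mem 3 4 (by decide) (-1) (by norm_num) hI
    · exact embm_mem 1 2 (by decide) 1 (by norm_num) hI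
    · exact embm_mem 3 4 (by decide) (-1) (by norm_num) hI
    · exact embm_mem 0 2 (by decide) 1 (by norm_num) hI
    · exact embm_mem 0 1 (by decide) 1 (by norm_num) hI
  rw [this, measure_empty]

/-! ### The measure preserving parametrization -/

/-- The parameter space. -/
abbrev Wsp : Type := (ℝ×ℝ) × ((ℝ×ℝ) × ((ℝ×ℝ) × ((ℝ×ℝ) × (ℝ×ℝ))))

def r1 : ℝ ≃ᵐ (Fin 1 → ℝ) := (MeasurableEquiv.funUnique (Fin 1) ℝ).symm

lemma r1MP : MeasurePreserving r1 volume volume := (volume_preserving_funUnique _ _).symm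

def pairE : (ℝ × ℝ) ≃ᵐ (Fin 2 → ℝ) := (r1.prodCongr r1).trans (apEquiv 1 1)

lemma prodMP {α β γ δ : Type*} [MeasureSpace α] [MeasureSpace β] [MeasureSpace γ] [MeasureSpace δ]
    [SFinite (volume : Measure α)] [SFinite (volume : Measure γ)]
    {f : α → β} {g : γ → δ} (hf : MeasurePreserving f volume volume)
    (hg : MeasurePreserving g volume volume) :
    MeasurePreserving (Prod.map f g) (volume : Measure (α × γ)) (volume : Measure (β × δ)) := by
  rw [Measure.volume_eq_prod, Measure.volume_eq_prod]
  exact hf.prod hg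

lemma pairMP : MeasurePreserving pairE volume volume :=
  (prodMP r1MP r1MP).trans (apMP 1 1)

def glue4 : ((ℝ×ℝ) × (ℝ×ℝ)) ≃ᵐ (Fin 4 → ℝ) := (pairE.prodCongr pairE).trans (apEquiv 2 2)
def glue6 : ((ℝ×ℝ) × ((ℝ×ℝ) × (ℝ×ℝ))) ≃ᵐ (Fin 6 → ℝ) :=
  (pairE.prodCongr glue4).trans (apEquiv 2 4)
def glue8 : ((ℝ×ℝ) × ((ℝ×ℝ) × ((ℝ×ℝ) × (ℝ×ℝ)))) ≃ᵐ (Fin 8 → ℝ) :=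
  (pairE.prodCongr glue6).trans (apEquiv 2 6)
def glue10 : Wsp ≃ᵐ (Fin 10 → ℝ) := (pairE.prodCongr glue8).trans (apEquiv 2 8)

lemma glue4MP : MeasurePreserving glue4 volume volume := (prodMP pairMP pairMP).trans (apMP 2 2)
lemma glue6MP : MeasurePreserving glue6 volume volume := (prodMP pairMP glue4MP).trans (apMP 2 4)
lemma glue8MP : MeasurePreserving glue8 volume volume := (prodMP pairMP glue6MP).trans (apMP 2 6)
lemma glue10MP : MeasurePreserving glue10 volume volume := (prodMP pairMP glue8MP).trans (apMP 2 8)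

/-- The shear `(v, a) ↦ (v + φ a, a)`. -/
def shearFstE {α : Type*} [MeasurableSpace α] (φ : α → ℝ × ℝ) (hφ : Measurable φ) :
    ((ℝ×ℝ) × α) ≃ᵐ ((ℝ×ℝ) × α) where
  toEquiv := ⟨fun p => (p.1 + φ p.2, p.2), fun p => (p.1 - φ p.2, p.2),
    fun p => by simp, fun p => by simp⟩
  measurable_toFun := (measurable_fst.add (hφ.comp measurable_snd)).prodMk measurable_snd
  measurable_invFun := (measurable_fst.sub (hφ.comp measurable_snd)).prodMk measurable_snd

lemma shearFstMP {α : Type*} [MeasureSpace α] [SFinite (volume : Measure α)]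
    (φ : α → ℝ × ℝ) (hφ : Measurable φ) :
    MeasurePreserving (shearFstE φ hφ) volume volume := by
  have h1 : MeasurePreserving (fun p : α × (ℝ×ℝ) => (p.1, p.2 + φ p.1))
      ((volume : Measure α).prod volume) ((volume : Measure α).prod volume) :=
    MeasurePreserving.skew_product (g := fun a y => y + φ a) (MeasurePreserving.id volume)
      (show Measurable fun p : α × (ℝ×ℝ) => p.2 + φ p.1 from
        measurable_snd.add (hφ.comp measurable_fst))
      (Filter.Eventually.of_forall fun a => map_add_right_eq_self volume (φ a))
  rw [Measure.volume_eq_prod]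
  exact Measure.measurePreserving_swap.comp (h1.comp Measure.measurePreserving_swap)

def sigmaE : Fin 10 ≃ Fin 10 :=
  ⟨![8,2,3,0,1,6,9,7,4,5], ![3,4,1,2,8,9,5,7,0,6], by decide, by decide⟩

def permE : (Fin 10 → ℝ) ≃ᵐ (Fin 10 → ℝ) :=
  MeasurableEquiv.piCongrLeft (fun _ => ℝ) sigmaE.symm

lemma permMP : MeasurePreserving permE volume volume :=
  volume_measurePreserving_piCongrLeft _ _

def gE : (Fin 10 → ℝ) ≃ᵐ (EuclideanSpace ℝ (Fin 5) × EuclideanSpace ℝ (Fin 5)) :=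
  (apEquiv 5 5).symm.trans
    ((MeasurableEquiv.toLp 2 (Fin 5 → ℝ)).prodCongr
      (MeasurableEquiv.toLp 2 (Fin 5 → ℝ)))

lemma gMP : MeasurePreserving gE volume volume :=
  (MeasurePreserving.symm _ (apMP 5 5)).trans
    (prodMP (EuclideanSpace.volume_preserving_symm_measurableEquiv_toLp (Fin 5)).symm
      (EuclideanSpace.volume_preserving_symm_measurableEquiv_toLp (Fin 5)).symm)

def shA : Wsp ≃ᵐ Wsp :=
  (MeasurableEquiv.refl (ℝ×ℝ)).prodCongr ((MeasurableEquiv.refl (ℝ×ℝ)).prodCongr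
    ((MeasurableEquiv.refl (ℝ×ℝ)).prodCongr
      (shearFstE (fun w₅ : ℝ×ℝ => (w₅.1, 0)) (by fun_prop))))

def shB : Wsp ≃ᵐ Wsp :=
  (MeasurableEquiv.refl (ℝ×ℝ)).prodCongr
    (shearFstE (fun z : (ℝ×ℝ) × ((ℝ×ℝ) × (ℝ×ℝ)) => (z.2.2.2, 0)) (by fun_prop))

lemma shAMP : MeasurePreserving shA volume volume :=
  prodMP (MeasurePreserving.id volume) (prodMP (MeasurePreserving.id volume)
    (prodMP (MeasurePreserving.id volume) (shearFstMP _ _)))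

lemma shBMP : MeasurePreserving shB volume volume :=
  prodMP (MeasurePreserving.id volume) (shearFstMP _ _)

/-- The full parametrizing measurable equivalence. -/
def TE : Wsp ≃ᵐ (EuclideanSpace ℝ (Fin 5) × EuclideanSpace ℝ (Fin 5)) :=
  shB.trans (shA.trans (glue10.trans (permE.trans gE)))

lemma TMP : MeasurePreserving TE volume volume :=
  shBMP.trans (shAMP.trans (glue10MP.trans (permMP.trans gMP)))

lemma TE_fst (w : Wsp) (l : Fin 5) :
    (TE w).1 l = ![w.2.2.2.2.1, w.2.1.1 + w.2.2.2.2.2, w.2.1.2 + 0, w.1.1, w.1.2] l := by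
  fin_cases l <;> rfl

lemma TE_snd (w : Wsp) (l : Fin 5) :
    (TE w).2 l = ![w.2.2.2.1.1 + w.2.2.2.2.1, w.2.2.2.2.2, w.2.2.2.1.2 + 0,
      w.2.2.1.1, w.2.2.1.2] l := by
  fin_cases l <;> rfl

lemma Teq (w : Wsp) :
    TE w = inflationMap (embk 0 w.1) (embk 1 w.2.1) (embk 2 w.2.2.1)
      (embk 3 w.2.2.2.1) (embk 4 w.2.2.2.2) := by
  apply Prod.ext
  · ext l
    rw [TE_fst]
    show _ = (embk 4 w.2.2.2.2 + embk 1 w.2.1 - embk 0 w.1) l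
    have h : (embk 4 w.2.2.2.2 + embk 1 w.2.1 - embk 0 w.1) l
        = embm 0 1 1 w.2.2.2.2 l + embm 1 2 1 w.2.1 l - embm 3 4 (-1) w.1 l := rfl
    rw [h]
    fin_cases l <;> simp [embm] <;> ring
  · ext l
    rw [TE_snd]
    show _ = (embk 4 w.2.2.2.2 + embk 3 w.2.2.2.1 - embk 2 w.2.2.1) l
    have h : (embk 4 w.2.2.2.2 + embk 3 w.2.2.2.1 - embk 2 w.2.2.1) l
        = embm 0 1 1 w.2.2.2.2 l + embm 0 2 1 w.2.2.2.1 l - embm 3 4 (-1) w.2.2.1 l := rfl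
    rw [h]
    fin_cases l <;> simp [embm] <;> ring

/-- The box in the parameter space. -/
def BoxW : Set Wsp := sqI2 ×ˢ (sqI2 ×ˢ (sqI2 ×ˢ (sqI2 ×ˢ sqI2)))

lemma prodRho_eq : rho2.prod (rho2.prod (rho2.prod (rho2.prod rho2)))
    = (volume : Measure Wsp).restrict BoxW := by
  rw [BoxW, rho2, Measure.prod_restrict, Measure.prod_restrict, Measure.prod_restrict,
    Measure.prod_restrict, ← Measure.volume_eq_prod, ← Measure.volume_eq_prod,
    ← Measure.volume_eq_prod, ← Measure.volume_eq_prod]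

lemma volume_BoxW : (volume : Measure Wsp) BoxW = 1 := by
  rw [← Measure.restrict_apply_univ, ← prodRho_eq]
  exact measure_univ

end InflationAux

set_option maxHeartbeats 1000000 in
theorem inflation_measures_exist :
    ∃ lam : Fin 5 → Measure (EuclideanSpace ℝ (Fin 5)),
      (∀ i, IsProbabilityMeasure (lam i)) ∧
      (∀ i, lam i squaresUnionᶜ = 0) ∧
      (∀ f : EuclideanSpace ℝ (Fin 5) × EuclideanSpace ℝ (Fin 5) → ℝ≥0∞, Measurable f →
        (∫⁻ x₁, ∫⁻ x₂, ∫⁻ x₃, ∫⁻ x₄, ∫⁻ x₅, f (inflationMap x₁ x₂ x₃ x₄ x₅)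
          ∂(lam 4) ∂(lam 3) ∂(lam 2) ∂(lam 1) ∂(lam 0)) ≤ ∫⁻ z, f z ∂volume) ∧
      0 < volume {z : EuclideanSpace ℝ (Fin 5) × EuclideanSpace ℝ (Fin 5) |
        ∃ x₁ ∈ squaresUnion, ∃ x₂ ∈ squaresUnion, ∃ x₃ ∈ squaresUnion,
        ∃ x₄ ∈ squaresUnion, ∃ x₅ ∈ squaresUnion, z = inflationMap x₁ x₂ x₃ x₄ x₅} := by
  classical
  refine ⟨lamF, fun i => inferInstance, lamF_compl, ?_, ?_⟩
  · -- the integral inequality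
    intro f hf
    -- measurability ladder
    have h5 : Measurable (fun q :
        (((EuclideanSpace ℝ (Fin 5) × EuclideanSpace ℝ (Fin 5)) × EuclideanSpace ℝ (Fin 5))
          × EuclideanSpace ℝ (Fin 5)) × EuclideanSpace ℝ (Fin 5) =>
        f (inflationMap q.1.1.1.1 q.1.1.1.2 q.1.1.2 q.1.2 q.2)) := by
      refine hf.comp ?_
      unfold inflationMap
      fun_prop
    have h4 := h5.lintegral_prod_right' (ν := lamF 4)
    have h3 := h4.lintegral_prod_right' (ν := lamF 3)
    have h2 := h3.lintegral_prod_right' (ν := lamF 2)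
    have h1 := h2.lintegral_prod_right' (ν := lamF 1)
    have hTE : Measurable fun w : Wsp => f (TE w) := hf.comp TE.measurable
    calc
      ∫⁻ x₁, ∫⁻ x₂, ∫⁻ x₃, ∫⁻ x₄, ∫⁻ x₅, f (inflationMap x₁ x₂ x₃ x₄ x₅)
          ∂(lamF 4) ∂(lamF 3) ∂(lamF 2) ∂(lamF 1) ∂(lamF 0)
        = ∫⁻ w₁, ∫⁻ x₂, ∫⁻ x₃, ∫⁻ x₄, ∫⁻ x₅, f (inflationMap (embk 0 w₁) x₂ x₃ x₄ x₅)
          ∂(lamF 4) ∂(lamF 3) ∂(lamF 2) ∂(lamF 1) ∂rho2 :=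
        lintegral_map h1 (embk_measurable 0)
      _ = ∫⁻ w₁, ∫⁻ w₂, ∫⁻ x₃, ∫⁻ x₄, ∫⁻ x₅,
            f (inflationMap (embk 0 w₁) (embk 1 w₂) x₃ x₄ x₅)
          ∂(lamF 4) ∂(lamF 3) ∂(lamF 2) ∂rho2 ∂rho2 :=
        lintegral_congr fun w₁ =>
          lintegral_map (h2.comp (measurable_prodMk_left (x := embk 0 w₁)))
            (embk_measurable 1)
      _ = ∫⁻ w₁, ∫⁻ w₂, ∫⁻ w₃, ∫⁻ x₄, ∫⁻ x₅,
            f (inflationMap (embk 0 w₁) (embk 1 w₂) (embk 2 w₃) x₄ x₅)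
          ∂(lamF 4) ∂(lamF 3) ∂rho2 ∂rho2 ∂rho2 :=
        lintegral_congr fun w₁ => lintegral_congr fun w₂ =>
          lintegral_map (h3.comp (measurable_prodMk_left (x := (embk 0 w₁, embk 1 w₂))))
            (embk_measurable 2)
      _ = ∫⁻ w₁, ∫⁻ w₂, ∫⁻ w₃, ∫⁻ w₄, ∫⁻ x₅,
            f (inflationMap (embk 0 w₁) (embk 1 w₂) (embk 2 w₃) (embk 3 w₄) x₅)
          ∂(lamF 4) ∂rho2 ∂rho2 ∂rho2 ∂rho2 :=
        lintegral_congr fun w₁ => lintegral_congr fun w₂ => lintegral_congr fun w₃ =>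
          lintegral_map
            (h4.comp (measurable_prodMk_left (x := ((embk 0 w₁, embk 1 w₂), embk 2 w₃))))
            (embk_measurable 3)
      _ = ∫⁻ w₁, ∫⁻ w₂, ∫⁻ w₃, ∫⁻ w₄, ∫⁻ w₅,
            f (inflationMap (embk 0 w₁) (embk 1 w₂) (embk 2 w₃) (embk 3 w₄) (embk 4 w₅))
          ∂rho2 ∂rho2 ∂rho2 ∂rho2 ∂rho2 :=
        lintegral_congr fun w₁ => lintegral_congr fun w₂ => lintegral_congr fun w₃ =>
          lintegral_congr fun w₄ =>
          lintegral_map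
            (h5.comp (measurable_prodMk_left
              (x := (((embk 0 w₁, embk 1 w₂), embk 2 w₃), embk 3 w₄))))
            (embk_measurable 4)
      _ = ∫⁻ w₁, ∫⁻ w₂, ∫⁻ w₃, ∫⁻ w₄, ∫⁻ w₅,
            f (TE (w₁, (w₂, (w₃, (w₄, w₅))))) ∂rho2 ∂rho2 ∂rho2 ∂rho2 ∂rho2 := by
        refine lintegral_congr fun w₁ => lintegral_congr fun w₂ => lintegral_congr fun w₃ =>
          lintegral_congr fun w₄ => lintegral_congr fun w₅ => ?_
        rw [Teq]
      _ = ∫⁻ w, f (TE w) ∂(rho2.prod (rho2.prod (rho2.prod (rho2.prod rho2)))) := by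
        have m1 : ∀ w₁ : ℝ×ℝ, Measurable fun v : (ℝ×ℝ)×((ℝ×ℝ)×((ℝ×ℝ)×(ℝ×ℝ))) =>
            f (TE (w₁, v)) := fun w₁ => hTE.comp measurable_prodMk_left
        have m2 : ∀ (w₁ w₂ : ℝ×ℝ), Measurable fun v : (ℝ×ℝ)×((ℝ×ℝ)×(ℝ×ℝ)) =>
            f (TE (w₁, (w₂, v))) := fun w₁ w₂ => (m1 w₁).comp measurable_prodMk_left
        have m3 : ∀ (w₁ w₂ w₃ : ℝ×ℝ), Measurable fun v : (ℝ×ℝ)×(ℝ×ℝ) =>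
            f (TE (w₁, (w₂, (w₃, v)))) := fun w₁ w₂ w₃ =>
          (m2 w₁ w₂).comp measurable_prodMk_left
        rw [lintegral_prod _ hTE.aemeasurable]
        refine lintegral_congr fun w₁ => ?_
        rw [lintegral_prod _ (m1 w₁).aemeasurable]
        refine lintegral_congr fun w₂ => ?_
        rw [lintegral_prod _ (m2 w₁ w₂).aemeasurable]
        refine lintegral_congr fun w₃ => ?_
        rw [lintegral_prod _ (m3 w₁ w₂ w₃).aemeasurable]
      _ = ∫⁻ w, f (TE w) ∂((volume : Measure Wsp).restrict BoxW) := by rw [prodRho_eq]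
      _ ≤ ∫⁻ w, f (TE w) ∂(volume : Measure Wsp) :=
        lintegral_mono' Measure.restrict_le_self le_rfl
      _ = ∫⁻ z, f z ∂volume := TMP.lintegral_comp hf
  · -- positivity
    have hsub : TE '' BoxW ⊆ {z : EuclideanSpace ℝ (Fin 5) × EuclideanSpace ℝ (Fin 5) |
        ∃ x₁ ∈ squaresUnion, ∃ x₂ ∈ squaresUnion, ∃ x₃ ∈ squaresUnion,
        ∃ x₄ ∈ squaresUnion, ∃ x₅ ∈ squaresUnion, z = inflationMap x₁ x₂ x₃ x₄ x₅} := by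
      rintro z ⟨w, hw, rfl⟩
      obtain ⟨hw1, hw2, hw3, hw4, hw5⟩ :
          w.1 ∈ sqI2 ∧ w.2.1 ∈ sqI2 ∧ w.2.2.1 ∈ sqI2 ∧ w.2.2.2.1 ∈ sqI2 ∧ w.2.2.2.2 ∈ sqI2 :=
        ⟨hw.1, hw.2.1, hw.2.2.1, hw.2.2.2.1, hw.2.2.2.2⟩
      exact ⟨embk 0 w.1, embm_mem 3 4 (by decide) (-1) (by norm_num) hw1,
        embk 1 w.2.1, embm_mem 1 2 (by decide) 1 (by norm_num) hw2,
        embk 2 w.2.2.1, embm_mem 3 4 (by decide) (-1) (by norm_num) hw3,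
        embk 3 w.2.2.2.1, embm_mem 0 2 (by decide) 1 (by norm_num) hw4,
        embk 4 w.2.2.2.2, embm_mem 0 1 (by decide) 1 (by norm_num) hw5,
        Teq w⟩
    have himg : volume (TE '' BoxW) = 1 := by
      rw [← TMP.map_eq, MeasurableEquiv.map_apply, Set.preimage_image_eq BoxW TE.injective, volume_BoxW]
    calc (0:ℝ≥0∞) < 1 := zero_lt_one
      _ = volume (TE '' BoxW) := himg.symm
      _ ≤ _ := measure_mono hsub
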